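/- For any nonzero rational number a, the product of |a|_p over all prime numbers p, multiplied by the usual archimedean absolute value |a|_∞, equals 1. -/

import Mathlib

open Function

noncomputable def F (a : ℚ) : ℝ := ∏ᶠ p : Nat.Primes, (padicNorm p a : ℝ)

lemma support_finite (a : ℚ) (ha : a ≠ 0) :
    (mulSupport fun p : Nat.Primes => (padicNorm p a : ℝ)).Finite := by
  have hN : a.num.natAbs * a.den ≠ 0 := by
    simp [Rat.num_ne_zero.mpr ha, a.den_nz]
  apply Set.Finite.subset (Set.Finite.preimage (f := fun p : Nat.Primes => (p : ℕ))
    (Set.injOn_of_injective Nat.Primes.coe_nat_injective)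
    ((Nat.divisors (a.num.natAbs * a.den)).finite_toSet))
  intro p hp
  simp only [Set.mem_preimage, Finset.mem_coe, Nat.mem_divisors]
  refine ⟨?_, hN⟩
  by_contra hdvd
  apply hp
  have hpp : Fact (Nat.Prime (p : ℕ)) := ⟨p.2⟩
  have h1 : ¬ (p : ℕ) ∣ a.num.natAbs := fun h => hdvd (h.mul_right _)
  have h2 : ¬ (p : ℕ) ∣ a.den := fun h => hdvd (h.mul_left _)
  have hnum : padicNorm p a.num = 1 := by
    rw [padicNorm.int_eq_one_iff]
    exact fun h => h1 (Int.natCast_dvd.mp h)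
  have hden : padicNorm p (a.den : ℚ) = 1 := (padicNorm.nat_eq_one_iff _).mpr h2
  have : padicNorm p a = 1 := by
    have := padicNorm.div (p := p) (a.num : ℚ) (a.den : ℚ)
    rw [Rat.num_div_den] at this
    rw [this, hnum, hden]; norm_num
  simp [this]

lemma F_mul (a b : ℚ) (ha : a ≠ 0) (hb : b ≠ 0) : F (a * b) = F a * F b := by
  unfold F
  rw [← finprod_mul_distrib (support_finite a ha) (support_finite b hb)]
  apply finprod_congr
  intro p
  have : Fact (Nat.Prime (p : ℕ)) := ⟨p.2⟩
  rw [padicNorm.mul]; push_cast; ring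

lemma F_prime (p : ℕ) (hp : p.Prime) : F (p : ℚ) = (p : ℝ)⁻¹ := by
  unfold F
  have : Fact p.Prime := ⟨hp⟩
  have h := finprod_eq_single (fun q : Nat.Primes => (padicNorm q (p : ℚ) : ℝ))
    (⟨p, hp⟩ : Nat.Primes) (by
      intro q hq
      have : Fact (Nat.Prime (q : ℕ)) := ⟨q.2⟩
      rw [padicNorm.padicNorm_of_prime_of_ne (q_prime := ⟨hp⟩)]
      · norm_num
      · exact fun hh => hq (Subtype.ext hh))
  rw [h]
  simp only
  rw [padicNorm.padicNorm_p_of_prime]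
  push_cast; rfl

lemma F_nat (n : ℕ) (hn : n ≠ 0) : F (n : ℚ) * n = 1 := by
  induction n using Nat.recOnMul with
  | zero => exact absurd rfl hn
  | one => unfold F; simp
  | prime p hp =>
    rw [F_prime p hp]
    field_simp
  | mul m k hm hk =>
    rcases Nat.mul_ne_zero_iff.mp hn with ⟨hm0, hk0⟩
    push_cast
    rw [F_mul _ _ (by exact_mod_cast hm0) (by exact_mod_cast hk0)]
    have := hm hm0
    have := hk hk0
    push_cast at *
    nlinarith [this]

lemma F_int (n : ℤ) (hn : n ≠ 0) : F (n : ℚ) * |(n : ℝ)| = 1 := by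
  have key : F ((n.natAbs : ℕ) : ℚ) * (n.natAbs : ℝ) = 1 :=
    F_nat n.natAbs (Int.natAbs_ne_zero.mpr hn)
  have habs : |(n : ℝ)| = (n.natAbs : ℝ) := by
    simp [Nat.cast_natAbs, Int.cast_abs]
  have hFeq : F (n : ℚ) = F ((n.natAbs : ℕ) : ℚ) := by
    unfold F
    apply finprod_congr
    intro p
    have : Fact (Nat.Prime (p : ℕ)) := ⟨p.2⟩
    congr 1
    rw [Nat.cast_natAbs, Int.cast_abs]
    rcases abs_choice ((n : ℤ) : ℚ) with h | h
    · rw [h]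
    · rw [h, padicNorm.neg]
  rw [hFeq, habs]; exact key

/-- Product formula over ℚ: for a nonzero rational `a`, the product of the
`p`-adic absolute values over all primes `p`, multiplied by the archimedean
absolute value, equals `1`. -/
theorem product_formula_rat (a : ℚ) (ha : a ≠ 0) :
    (∏ᶠ p : Nat.Primes, (padicNorm p a : ℝ)) * |(a : ℝ)| = 1 := by
  have hnum : a.num ≠ 0 := Rat.num_ne_zero.mpr ha
  have hden : (a.den : ℚ) ≠ 0 := by exact_mod_cast a.den_nz
  have hF : F a * F ((a.den : ℕ) : ℚ) = F ((a.num : ℤ) : ℚ) := by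
    rw [← F_mul a _ ha hden]
    congr 1
    exact_mod_cast Rat.mul_den_eq_num a
  have h1 := F_int a.num hnum
  have h2 := F_nat a.den a.den_nz
  have habs : |(a : ℝ)| * (a.den : ℝ) = |(a.num : ℝ)| := by
    have : (a : ℝ) = (a.num : ℝ) / (a.den : ℝ) := by rw [Rat.cast_def]
    rw [this, abs_div]
    have hd : (0:ℝ) < (a.den : ℝ) := by positivity
    rw [abs_of_pos hd]
    field_simp
  show F a * |(a : ℝ)| = 1
  have hFden : F ((a.den : ℕ) : ℚ) ≠ 0 := by
    intro h0
    rw [h0, zero_mul] at h2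
    exact one_ne_zero h2.symm
  have : F a * |(a : ℝ)| * (F ((a.den : ℕ) : ℚ) * (a.den : ℝ)) = 1 := by
    calc F a * |(a : ℝ)| * (F ((a.den : ℕ) : ℚ) * (a.den : ℝ))
        = (F a * F ((a.den : ℕ) : ℚ)) * (|(a : ℝ)| * (a.den : ℝ)) := by ring
      _ = F ((a.num : ℤ) : ℚ) * |(a.num : ℝ)| := by rw [hF, habs]
      _ = 1 := h1
  rw [h2, mul_one] at this
  exact this
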